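/- For every integer n ≥ 5, 2·∑_{k=0}^{n−1} |cos(2πk/n) + cos(4πk/n)| = 4·(D_{⌊n/6⌋}(2π/n) + D_{⌊n/6⌋}(4π/n)), where D_m(x) = sin((m+1/2)x)/sin(x/2) is the Dirichlet kernel and ⌊·⌋ is the floor function. -/

import Mathlib

open Real Finset

/-- The Dirichlet kernel `D_m(x) = sin((m + 1/2)x) / sin(x/2)`. -/
noncomputable def DKern (m : ℕ) (x : ℝ) : ℝ :=
  Real.sin ((m + 1 / 2) * x) / Real.sin (x / 2)

lemma sin_succ_half (m : ℕ) (x : ℝ) :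
    Real.sin ((m + 1/2) * x)
      = (1 + 2 * ∑ k ∈ Finset.range m, Real.cos ((k+1) * x)) * Real.sin (x/2) := by
  induction m with
  | zero => simp; ring_nf
  | succ m ih =>
    have h := Real.sin_sub_sin ((m + 1 + 1/2) * x) ((m + 1/2) * x)
    have e1 : (((m:ℝ) + 1 + 1/2) * x - ((m:ℝ) + 1/2) * x)/2 = x/2 := by ring
    have e2 : (((m:ℝ) + 1 + 1/2) * x + ((m:ℝ) + 1/2) * x)/2 = ((m:ℝ)+1) * x := by ring
    rw [e1, e2] at h
    rw [Finset.sum_range_succ]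
    push_cast
    push_cast at ih h
    linear_combination h + ih

lemma DKern_eq (m : ℕ) (x : ℝ) (hx : Real.sin (x/2) ≠ 0) :
    DKern m x = 1 + 2 * ∑ k ∈ Finset.range m, Real.cos ((k+1) * x) := by
  rw [DKern, sin_succ_half, mul_div_assoc, div_self hx, mul_one]

lemma sum_exp_zero (n j : ℕ) (h1 : 1 ≤ j) (h2 : j < n) :
    ∑ k ∈ Finset.range n, Real.cos (2 * π * j * k / n) = 0 := by
  have hn0 : (n:ℝ) ≠ 0 := Nat.cast_ne_zero.mpr (by omega)
  have hn0' : (n:ℂ) ≠ 0 := by exact_mod_cast Complex.ofReal_ne_zero.mpr hn0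
  have hne : ((2:ℂ) * π * Complex.I) ≠ 0 := by
    simp [Real.pi_ne_zero, Complex.I_ne_zero]
  have hζ : (Complex.exp (2 * π * Complex.I * j / n)) ≠ 1 := by
    rw [Ne, Complex.exp_eq_one_iff]
    rintro ⟨m, hm⟩
    field_simp at hm
    have hc : (2*(π:ℂ)*Complex.I) * j = (2*(π:ℂ)*Complex.I) * (m*n) := by
      linear_combination (2*(π:ℂ)*Complex.I) * hm
    have hjm : (j:ℂ) = (m:ℂ) * n := mul_left_cancel₀ hne hc
    have hj' : (j:ℤ) = m * (n:ℤ) := by exact_mod_cast hjm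
    have hb1 : (1:ℤ) ≤ (j:ℤ) := by exact_mod_cast h1
    have hb2 : (j:ℤ) < (n:ℤ) := by exact_mod_cast h2
    rcases le_or_gt m 0 with h | h
    · nlinarith [mul_le_mul_of_nonneg_right h (by positivity : (0:ℤ) ≤ (n:ℤ))]
    · nlinarith [mul_le_mul_of_nonneg_right h (by positivity : (0:ℤ) ≤ (n:ℤ))]
  have hgeom : ∑ k ∈ Finset.range n, (Complex.exp (2 * π * Complex.I * j / n))^k = 0 := by
    rw [geom_sum_eq hζ]
    have hpow : Complex.exp (2 * π * Complex.I * j / n) ^ n = 1 := by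
      rw [← Complex.exp_nat_mul]
      have e : (n:ℂ) * (2 * π * Complex.I * j / n) = ((j:ℤ)) * (2 * π * Complex.I) := by
        field_simp; push_cast; ring
      rw [e, Complex.exp_int_mul_two_pi_mul_I]
    rw [hpow]; simp
  have hterm : ∀ k:ℕ, Real.cos (2 * π * j * k / n)
      = ((Complex.exp (2 * π * Complex.I * j / n))^k).re := by
    intro k
    rw [← Complex.exp_nat_mul]
    have e : (k:ℂ) * (2 * π * Complex.I * j / n) = ((2 * π * j * k / n : ℝ) : ℂ) * Complex.I := by
      push_cast; field_simp
    rw [e, Complex.exp_ofReal_mul_I_re]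
  simp_rw [hterm]
  rw [← Complex.re_sum, hgeom]
  simp

lemma f_prod (n k : ℕ) (hn : 0 < n) :
    Real.cos (2 * π * k / n) + Real.cos (4 * π * k / n)
      = 2 * Real.cos (3 * (π * k / n)) * Real.cos (π * k / n) := by
  rw [Real.cos_add_cos]
  have hn0 : (n:ℝ) ≠ 0 := Nat.cast_ne_zero.mpr hn.ne'
  have e1 : (2 * π * k / n + 4 * π * k / n)/2 = 3 * (π * k / n) := by field_simp; ring
  have e2 : (2 * π * k / n - 4 * π * k / n)/2 = -(π * k / n) := by field_simp; ring
  rw [e1, e2, Real.cos_neg]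

lemma f_nonneg (n k : ℕ) (hn : 0 < n) (hk : 6 * k ≤ n) :
    0 ≤ Real.cos (2 * π * k / n) + Real.cos (4 * π * k / n) := by
  rw [f_prod n k hn]
  have hn0 : (0:ℝ) < n := by exact_mod_cast hn
  set θ : ℝ := π * k / n with hθ
  have hθ0 : 0 ≤ θ := by positivity
  have hθ6 : θ ≤ π / 6 := by
    rw [hθ, div_le_div_iff₀ hn0 (by norm_num)]
    have : (6:ℝ) * k ≤ n := by exact_mod_cast hk
    nlinarith [Real.pi_pos]
  have h1 : 0 ≤ Real.cos θ := Real.cos_nonneg_of_mem_Icc ⟨by linarith [Real.pi_pos], by linarith [Real.pi_pos]⟩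
  have h2 : 0 ≤ Real.cos (3 * θ) := Real.cos_nonneg_of_mem_Icc ⟨by linarith [Real.pi_pos], by linarith [Real.pi_pos]⟩
  positivity

lemma f_nonpos (n k : ℕ) (hn : 0 < n) (hk1 : n < 6 * k) (hk2 : k ≤ n) (hk3 : n < 6 * (n - k)) :
    Real.cos (2 * π * k / n) + Real.cos (4 * π * k / n) ≤ 0 := by
  rw [f_prod n k hn]
  have hn0 : (0:ℝ) < n := by exact_mod_cast hn
  have hpi := Real.pi_pos
  set θ : ℝ := π * k / n with hθ
  have hθ0 : 0 ≤ θ := by positivity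
  have hθ6 : π / 6 < θ := by
    rw [hθ, div_lt_div_iff₀ (by norm_num) hn0]
    have : (n:ℝ) < 6 * k := by exact_mod_cast hk1
    nlinarith
  have hθ5 : θ < 5 * π / 6 := by
    rw [hθ, div_lt_div_iff₀ hn0 (by norm_num)]
    have h6 : (n:ℝ) < 6 * ((n:ℝ) - k) := by
      have : (n:ℝ) < 6 * ((n - k : ℕ):ℝ) := by exact_mod_cast hk3
      rwa [Nat.cast_sub hk2] at this
    nlinarith
  rcases le_total θ (π / 2) with h | h
  · have h1 : 0 ≤ Real.cos θ := Real.cos_nonneg_of_mem_Icc ⟨by linarith, by linarith⟩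
    have h2 : Real.cos (3 * θ) ≤ 0 :=
      Real.cos_nonpos_of_pi_div_two_le_of_le (by linarith) (by linarith)
    nlinarith
  · have h1 : Real.cos θ ≤ 0 :=
      Real.cos_nonpos_of_pi_div_two_le_of_le (by linarith) (by linarith)
    have h2 : 0 ≤ Real.cos (3 * θ) := by
      have : Real.cos (3 * θ) = Real.cos (3 * θ - 2 * π) := (Real.cos_sub_two_pi _).symm
      rw [this]
      exact Real.cos_nonneg_of_mem_Icc ⟨by linarith, by linarith⟩
    nlinarith

lemma f_reflect (n j : ℕ) (hj : j ≤ n) (hn : 0 < n) :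
    Real.cos (2 * π * ((n - j : ℕ):ℝ) / n) + Real.cos (4 * π * ((n - j : ℕ):ℝ) / n)
      = Real.cos (2 * π * j / n) + Real.cos (4 * π * j / n) := by
  have hn0 : (n:ℝ) ≠ 0 := Nat.cast_ne_zero.mpr hn.ne'
  rw [Nat.cast_sub hj]
  have e1 : 2 * π * ((n:ℝ) - j) / n = 2 * π - 2 * π * j / n := by field_simp
  have e2 : 4 * π * ((n:ℝ) - j) / n = 2*(2 * π) - 4 * π * j / n := by field_simp; ring
  rw [e1, e2, Real.cos_sub, Real.cos_sub]
  have c4 : Real.cos (2*(2*π)) = 1 := by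
    rw [Real.cos_two_mul, Real.cos_two_pi]; norm_num
  have s4 : Real.sin (2*(2*π)) = 0 := by
    rw [Real.sin_two_mul, Real.sin_two_pi]; ring
  rw [c4, s4]
  simp [Real.cos_two_pi, Real.sin_two_pi]

lemma main_sum (n : ℕ) (hn : 5 ≤ n) (f : ℕ → ℝ)
    (hrefl : ∀ j ≤ n, f (n - j) = f j)
    (hpos : ∀ k, 6 * k ≤ n → 0 ≤ f k)
    (hneg : ∀ k, n < 6 * k → k ≤ n → n < 6 * (n - k) → f k ≤ 0)
    (hzero : ∑ k ∈ Finset.range n, f k = 0) :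
    ∑ k ∈ Finset.range n, |f k| = 2 * (2 * ∑ k ∈ Finset.range (n/6 + 1), f k - f 0) := by
  set m := n / 6 with hm
  have hm6 : 6 * m ≤ n := by omega
  have hm5 : n < 6 * m + 6 := by omega
  have hmn : m + 1 ≤ n - m := by omega
  have hsplit : ∀ (g : ℕ → ℝ), ∑ k ∈ Finset.range n, g k
      = ∑ k ∈ Finset.range (m+1), g k + ∑ k ∈ Finset.Ico (m+1) (n-m), g k
        + ∑ k ∈ Finset.Ico (n-m) n, g k := by
    intro g
    rw [Finset.range_eq_Ico,
      ← Finset.sum_Ico_consecutive g (show (0:ℕ) ≤ n-m by omega) (show n-m ≤ n by omega),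
      ← Finset.sum_Ico_consecutive g (show (0:ℕ) ≤ m+1 by omega) hmn]
    rw [Finset.range_eq_Ico]
  have hA : ∑ k ∈ Finset.range (m+1), |f k| = ∑ k ∈ Finset.range (m+1), f k :=
    Finset.sum_congr rfl fun k hk => abs_of_nonneg (hpos k (by
      rw [Finset.mem_range] at hk; omega))
  have hB : ∑ k ∈ Finset.Ico (m+1) (n-m), |f k| = -∑ k ∈ Finset.Ico (m+1) (n-m), f k := by
    rw [← Finset.sum_neg_distrib]
    refine Finset.sum_congr rfl fun k hk => ?_
    rw [Finset.mem_Ico] at hk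
    exact abs_of_nonpos (hneg k (by omega) (by omega) (by omega))
  have hC : ∑ k ∈ Finset.Ico (n-m) n, |f k| = ∑ k ∈ Finset.Ico (n-m) n, f k := by
    refine Finset.sum_congr rfl fun k hk => ?_
    rw [Finset.mem_Ico] at hk
    have h := hrefl (n-k) (by omega)
    rw [show n-(n-k) = k from by omega] at h
    rw [h]
    exact abs_of_nonneg (hpos (n-k) (by omega))
  have hD : ∑ k ∈ Finset.Ico (n-m) n, f k = ∑ k ∈ Finset.range (m+1), f k - f 0 := by
    rw [Finset.sum_Ico_eq_sum_range, show n - (n-m) = m from by omega]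
    have e : ∀ i ∈ Finset.range m, f (n-m+i) = f (m-1-i+1) := by
      intro i hi
      rw [Finset.mem_range] at hi
      have h := hrefl (m-i) (by omega)
      rw [show n-(m-i) = n-m+i from by omega] at h
      rw [show m-1-i+1 = m-i from by omega]
      exact h
    have hE : ∑ x ∈ Finset.range m, f (m-1-x+1) = ∑ j ∈ Finset.range m, f (j+1) :=
      Finset.sum_range_reflect (fun j => f (j+1)) m
    rw [Finset.sum_congr rfl e, hE, Finset.sum_range_succ' f m]
    ring
  have h0 := hzero
  rw [hsplit f] at h0
  rw [hsplit (fun k => |f k|)]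
  rw [hA, hB, hC, hD]
  linarith

/-- For every integer `n ≥ 5`,
`2 ∑_{k=0}^{n-1} |cos(2πk/n) + cos(4πk/n)| = 4 (D_{⌊n/6⌋}(2π/n) + D_{⌊n/6⌋}(4π/n))`. -/
theorem sum_abs_cos_eq_dirichlet (n : ℕ) (hn : 5 ≤ n) :
    2 * ∑ k ∈ Finset.range n, |Real.cos (2 * π * k / n) + Real.cos (4 * π * k / n)| =
      4 * (DKern (n / 6) (2 * π / n) + DKern (n / 6) (4 * π / n)) := by
  have hn0 : 0 < n := by omega
  have hnR : (0:ℝ) < n := by exact_mod_cast hn0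
  have hn5 : (5:ℝ) ≤ n := by exact_mod_cast hn
  have hπ := Real.pi_pos
  -- the sum of f over a full period is zero
  have hz1 := sum_exp_zero n 1 le_rfl (by omega)
  have hz2 := sum_exp_zero n 2 (by omega) (by omega)
  simp only [show ∀ k:ℕ, (2*π*((1:ℕ):ℝ)*(k:ℝ)/n) = 2*π*k/n from fun k => by push_cast; ring] at hz1
  simp only [show ∀ k:ℕ, (2*π*((2:ℕ):ℝ)*(k:ℝ)/n) = 4*π*k/n from fun k => by push_cast; ring] at hz2
  have hzero : ∑ k ∈ Finset.range n,
      (Real.cos (2*π*k/n) + Real.cos (4*π*k/n)) = 0 := by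
    rw [Finset.sum_add_distrib, hz1, hz2, add_zero]
  -- apply the main summation identity
  have key := main_sum n hn (fun k => Real.cos (2*π*k/n) + Real.cos (4*π*k/n))
    (fun j hj => f_reflect n j hj hn0)
    (fun k hk => f_nonneg n k hn0 hk)
    (fun k h1 h2 h3 => f_nonpos n k hn0 h1 h2 h3)
    hzero
  rw [key]
  have hs1 : Real.sin ((2*π/(n:ℝ))/2) ≠ 0 := by
    rw [show (2*π/(n:ℝ))/2 = π/n from by ring]
    refine ne_of_gt (Real.sin_pos_of_pos_of_lt_pi (by positivity) ?_)
    rw [div_lt_iff₀ hnR]; nlinarith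
  have hs2 : Real.sin ((4*π/(n:ℝ))/2) ≠ 0 := by
    rw [show (4*π/(n:ℝ))/2 = 2*π/n from by ring]
    refine ne_of_gt (Real.sin_pos_of_pos_of_lt_pi (by positivity) ?_)
    rw [div_lt_iff₀ hnR]; nlinarith
  rw [DKern_eq _ _ hs1, DKern_eq _ _ hs2]
  rw [Finset.sum_range_succ' (fun k : ℕ => Real.cos (2*π*(k:ℝ)/n) + Real.cos (4*π*(k:ℝ)/n)) (n/6)]
  simp only [Nat.cast_zero, Nat.cast_add, Nat.cast_one]
  rw [Finset.sum_add_distrib]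
  have ea : ∀ k:ℕ, ((k:ℝ)+1)*(2*π/(n:ℝ)) = 2*π*((k:ℝ)+1)/n := fun k => by ring
  have eb : ∀ k:ℕ, ((k:ℝ)+1)*(4*π/(n:ℝ)) = 4*π*((k:ℝ)+1)/n := fun k => by ring
  simp_rw [ea, eb]
  norm_num
  ring
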